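/- Let n ≥ 1 and let i ∈ {1,…,n}. For every b ∈ B with b ≠ i−1, every integer j ≥ 0 and every μ ∈ ℤ^{n+1}, the unrestricted one-dimensional sum of the level-1 perfect crystal of type A_n^{(1)} satisfies g_j(b, μ) = g_j(b, s_i·μ), where s_i·μ denotes the vector obtained from μ by interchanging the entries μ_{i−1} and μ_i. (This is the case m = 0 of the Weyl-reflection identity for the one-dimensional sums, for a classical index i and an element b with φ_i(b) = 0.) -/

import Mathlib

open Finset

noncomputable section

/-- The indeterminate `q`, living in the field of rational functions `ℚ(q)`. -/
def q : RatFunc ℚ := RatFunc.X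

/-- Energy function of the level-1 perfect crystal `B = {0,…,n}` of type `A_n^{(1)}`. -/
def H (n : ℕ) (b b' : Fin (n + 1)) : ℤ := if b' ≤ b then 1 else 0

/-- The unrestricted one-dimensional sum `g_j(b,μ)`. -/
def g (n j : ℕ) (b : Fin (n + 1)) (μ : Fin (n + 1) → ℤ) : RatFunc ℚ :=
  ∑ p ∈ Finset.univ.filter (fun p : Fin (j + 1) → Fin (n + 1) =>
      p (Fin.last j) = b ∧
      ∀ k, ((Finset.univ.filter (fun i : Fin j => p i.castSucc = k)).card : ℤ) = μ k),
    q ^ (∑ i : Fin j, ((i : ℤ) + 1) * H n (p i.succ) (p i.castSucc))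

/-- The standard basis vector `e_b` of `ℤ^{n+1}`. -/
def e (n : ℕ) (b : Fin (n + 1)) : Fin (n + 1) → ℤ := fun k => if k = b then 1 else 0

/-! ### Auxiliary definitions and lemmas -/

/-- A `snoc`-based reformulation of the one-dimensional sum `g`. -/
def g' (n j : ℕ) (b : Fin (n + 1)) (μ : Fin (n + 1) → ℤ) : RatFunc ℚ :=
  ∑ f ∈ Finset.univ.filter (fun f : Fin j → Fin (n + 1) =>
      ∀ k, ((Finset.univ.filter (fun i : Fin j => f i = k)).card : ℤ) = μ k),
    q ^ (∑ i : Fin j, ((i : ℤ) + 1) * H n ((Fin.snoc f b : Fin (j+1) → Fin (n+1)) i.succ) (f i))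

/-- Swap of the entries at `a` and `c`. -/
def sw {n : ℕ} (a c : Fin (n+1)) (μ : Fin (n+1) → ℤ) : Fin (n+1) → ℤ :=
  fun k => μ (Equiv.swap a c k)

lemma snocEquiv_coe (n j : ℕ) (x : Fin (n+1) × (Fin j → Fin (n+1))) :
    (Fin.snocEquiv (fun _ => Fin (n+1))) x = Fin.snoc x.2 x.1 := rfl

lemma q_ne_zero : q ≠ 0 := RatFunc.X_ne_zero

lemma g_eq_g' (n j : ℕ) (b : Fin (n+1)) (μ : Fin (n+1) → ℤ) : g n j b μ = g' n j b μ := by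
  unfold g g'
  rw [Finset.sum_filter, Finset.sum_filter]
  rw [← Equiv.sum_comp (Fin.snocEquiv (fun _ => Fin (n+1)))]
  simp only [snocEquiv_coe]
  rw [Fintype.sum_prod_type]
  rw [Finset.sum_eq_single_of_mem b (Finset.mem_univ b)]
  · apply Finset.sum_congr rfl
    intro f _
    simp only [Fin.snoc_last, Fin.snoc_castSucc, true_and]
  · intro x _ hx
    apply Finset.sum_eq_zero
    intro f _
    refine if_neg ?_
    simp only [Fin.snoc_last]
    tauto

lemma card_snoc (n j : ℕ) (f : Fin j → Fin (n+1)) (x k : Fin (n+1)) :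
    ((Finset.univ.filter (fun i : Fin (j+1) => (Fin.snoc f x : Fin (j+1) → Fin (n+1)) i = k)).card : ℤ)
      = ((Finset.univ.filter (fun i : Fin j => f i = k)).card : ℤ) + e n x k := by
  rw [Finset.card_filter, Finset.card_filter]
  push_cast
  rw [Fin.sum_univ_castSucc]
  simp only [Fin.snoc_castSucc, Fin.snoc_last, e]
  congr 1
  by_cases h : x = k
  · subst h; simp
  · rw [if_neg h, if_neg (Ne.symm h)]

/-- The recursion for `g'`, peeling off the last letter of the word. -/
lemma g'_succ (n j : ℕ) (b : Fin (n+1)) (μ : Fin (n+1) → ℤ) :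
    g' n (j+1) b μ
      = ∑ x : Fin (n+1), q ^ (((j:ℤ)+1) * H n b x) * g' n j x (μ - e n x) := by
  have key : ∀ x : Fin (n+1),
      q ^ (((j:ℤ)+1) * H n b x) * g' n j x (μ - e n x)
        = ∑ f : Fin j → Fin (n+1),
            if (∀ k, ((Finset.univ.filter (fun i : Fin (j+1) => (Fin.snoc f x : Fin (j+1) → Fin (n+1)) i = k)).card : ℤ) = μ k)
            then q ^ (∑ i : Fin (j+1), ((i:ℤ)+1) *
                H n ((Fin.snoc (Fin.snoc f x) b : Fin (j+2) → Fin (n+1)) i.succ)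
                  ((Fin.snoc f x : Fin (j+1) → Fin (n+1)) i)) else 0 := by
    intro x
    unfold g'
    rw [Finset.sum_filter, Finset.mul_sum]
    apply Finset.sum_congr rfl
    intro f _
    rw [mul_ite, mul_zero]
    have hcond : (∀ k, ((Finset.univ.filter (fun i : Fin j => f i = k)).card : ℤ) = (μ - e n x) k)
        ↔ (∀ k, ((Finset.univ.filter (fun i : Fin (j+1) => (Fin.snoc f x : Fin (j+1) → Fin (n+1)) i = k)).card : ℤ) = μ k) := by
      apply forall_congr'
      intro k
      rw [card_snoc, Pi.sub_apply]
      omega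
    have henergy : (∑ i : Fin (j+1), ((i:ℤ)+1) *
          H n ((Fin.snoc (Fin.snoc f x) b : Fin (j+2) → Fin (n+1)) i.succ)
            ((Fin.snoc f x : Fin (j+1) → Fin (n+1)) i))
        = ((j:ℤ)+1) * H n b x
          + ∑ i : Fin j, ((i:ℤ)+1) * H n ((Fin.snoc f x : Fin (j+1) → Fin (n+1)) i.succ) (f i) := by
      rw [Fin.sum_univ_castSucc]
      simp only [Fin.snoc_castSucc, Fin.succ_castSucc, Fin.snoc_last, Fin.succ_last,
        Fin.coe_castSucc, Fin.val_last]
      ring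
    rw [henergy, zpow_add₀ q_ne_zero]
    exact if_congr hcond rfl rfl
  rw [Finset.sum_congr rfl (fun x _ => key x)]
  unfold g'
  rw [Finset.sum_filter]
  rw [← Equiv.sum_comp (Fin.snocEquiv (fun _ => Fin (n+1)))]
  simp only [snocEquiv_coe]
  rw [Fintype.sum_prod_type]
  rfl

section SwapLemmas
variable {n : ℕ} (a c : Fin (n+1))

lemma sw_add (μ ν : Fin (n+1) → ℤ) : sw a c (μ + ν) = sw a c μ + sw a c ν := rfl
lemma sw_sub (μ ν : Fin (n+1) → ℤ) : sw a c (μ - ν) = sw a c μ - sw a c ν := rfl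
lemma sw_sw (μ : Fin (n+1) → ℤ) : sw a c (sw a c μ) = μ := by
  funext k; simp [sw, Equiv.swap_apply_self]
lemma sw_e (b : Fin (n+1)) : sw a c (e n b) = e n (Equiv.swap a c b) := by
  funext k
  simp only [sw, e]
  have : Equiv.swap a c k = b ↔ k = Equiv.swap a c b := by
    constructor
    · rintro rfl; rw [Equiv.swap_apply_self]
    · rintro rfl; rw [Equiv.swap_apply_self]
  simp [this]
lemma sw_e_left : sw a c (e n a) = e n c := by rw [sw_e, Equiv.swap_apply_left]
lemma sw_e_right : sw a c (e n c) = e n a := by rw [sw_e, Equiv.swap_apply_right]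
lemma sw_e_other (x : Fin (n+1)) (hxa : x ≠ a) (hxc : x ≠ c) : sw a c (e n x) = e n x := by
  rw [sw_e, Equiv.swap_apply_of_ne_of_ne hxa hxc]
lemma sw_zero_iff (μ : Fin (n+1) → ℤ) : (∀ k, sw a c μ k = 0) ↔ (∀ k, μ k = 0) :=
  ⟨fun h k => by have := h (Equiv.swap a c k); rwa [sw, Equiv.swap_apply_self] at this,
   fun h k => h _⟩

variable (hc : (c : ℕ) = (a : ℕ) + 1)
include hc

lemma H_ca : H n c a = 1 := by
  unfold H; rw [if_pos]; exact Fin.le_def.mpr (by omega)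
lemma H_ac : H n a c = 0 := by
  unfold H; rw [if_neg]; rw [Fin.le_def]; omega
lemma H_right (x : Fin (n+1)) (hx : x ≠ a) : H n x a = H n x c := by
  have h1 : (x : ℕ) ≠ (a : ℕ) := fun h => hx (Fin.ext h)
  unfold H
  simp only [Fin.le_def, hc]
  split_ifs <;> omega
lemma H_left (x : Fin (n+1)) (hx : x ≠ c) : H n a x = H n c x := by
  have h1 : (x : ℕ) ≠ (c : ℕ) := fun h => hx (Fin.ext h)
  unfold H
  simp only [Fin.le_def, hc]
  rw [hc] at h1
  split_ifs <;> omega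

end SwapLemmas

lemma H_refl {n : ℕ} (x : Fin (n+1)) : H n x x = 1 := by unfold H; rw [if_pos le_rfl]

lemma sum_split {M : Type*} [AddCommMonoid M] {α : Type*} [Fintype α] [DecidableEq α]
    {a c : α} (hac : a ≠ c) {F G : α → M}
    (h1 : ∀ x, x ≠ a → x ≠ c → F x = G x) (h2 : F a + F c = G a + G c) :
    ∑ x, F x = ∑ x, G x := by
  have key : ∀ (F : α → M), ∑ x, F x = (∑ x ∈ (Finset.univ.erase a).erase c, F x) + (F c + F a) := by
    intro F
    rw [← add_assoc,
      Finset.sum_erase_add _ _ (Finset.mem_erase.mpr ⟨Ne.symm hac, Finset.mem_univ c⟩),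
      Finset.sum_erase_add _ _ (Finset.mem_univ a)]
  rw [key F, key G]
  have h2' : F c + F a = G c + G a := by
    rw [add_comm, h2, add_comm]
  rw [h2']
  congr 1
  apply Finset.sum_congr rfl
  intro x hx
  rcases Finset.mem_erase.mp hx with ⟨hxc, hx2⟩
  exact h1 x (Finset.mem_erase.mp hx2).1 hxc

lemma g'_zero (n : ℕ) (b : Fin (n+1)) (μ : Fin (n+1) → ℤ) :
    g' n 0 b μ = if (∀ k, μ k = 0) then 1 else 0 := by
  unfold g'
  have hcond : ∀ f : Fin 0 → Fin (n+1),
      (∀ k, ((Finset.univ.filter (fun i : Fin 0 => f i = k)).card : ℤ) = μ k) ↔ (∀ k, μ k = 0) := by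
    intro f
    simp [eq_comm]
  by_cases h : ∀ k, μ k = 0
  · rw [if_pos h, Finset.filter_true_of_mem (fun f _ => (hcond f).mpr h)]
    simp
  · rw [if_neg h, Finset.filter_false_of_mem, Finset.sum_empty]
    intro f _
    exact fun hcontra => h ((hcond f).mp hcontra)

/-- The simultaneous induction: the reflection identity `P` for `b ≠ a`, together with
the auxiliary pair identity `Q`. -/
lemma main_induction (n : ℕ) (a c : Fin (n+1)) (hc : (c:ℕ) = (a:ℕ)+1) :
    ∀ j : ℕ, (∀ b, b ≠ a → ∀ μ, g' n j b μ = g' n j b (sw a c μ)) ∧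
      (∀ ν, g' n j c ν + g' n j a (ν + e n c - e n a)
          = g' n j c (sw a c ν + e n a - e n c) + g' n j a (sw a c ν)) := by
  have hac : a ≠ c := fun h => by rw [← h] at hc; omega
  have hca : c ≠ a := hac.symm
  intro j
  induction j with
  | zero =>
    constructor
    · intro b hb μ
      rw [g'_zero, g'_zero]
      exact (if_congr (sw_zero_iff a c μ) rfl rfl).symm
    · intro ν
      rw [g'_zero, g'_zero, g'_zero, g'_zero]
      have h1 : sw a c ν + e n a - e n c = sw a c (ν + e n c - e n a) := by
        rw [sw_sub, sw_add, sw_e_left, sw_e_right]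
      rw [h1, if_congr (sw_zero_iff a c _) rfl rfl, if_congr (sw_zero_iff a c ν) rfl rfl,
        add_comm]
  | succ j ih =>
    obtain ⟨P, Q⟩ := ih
    constructor
    · intro b hb μ
      rw [g'_succ, g'_succ]
      apply sum_split hac
      · intro x hxa hxc
        have h1 : sw a c μ - e n x = sw a c (μ - e n x) := by
          rw [sw_sub, sw_e_other a c x hxa hxc]
        rw [h1, ← P x hxa (μ - e n x)]
      · rw [H_right a c hc b hb]
        have hq := Q (μ - e n c)
        simp only [sw_sub, sw_e_right] at hq
        have e1 : μ - e n c + e n c - e n a = μ - e n a := by abel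
        have e2 : sw a c μ - e n a + e n a - e n c = sw a c μ - e n c := by abel
        rw [e1, e2] at hq
        linear_combination q ^ (((j:ℤ)+1) * H n b c) * hq
    · intro ν
      rw [g'_succ, g'_succ, g'_succ, g'_succ, ← Finset.sum_add_distrib,
        ← Finset.sum_add_distrib]
      apply sum_split hac
      · intro x hxa hxc
        have p1 : g' n j x (ν - e n x) = g' n j x (sw a c ν - e n x) := by
          rw [P x hxa (ν - e n x), sw_sub, sw_e_other a c x hxa hxc]
        have p2 : g' n j x (ν + e n c - e n a - e n x)
            = g' n j x (sw a c ν + e n a - e n c - e n x) := by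
          rw [P x hxa (ν + e n c - e n a - e n x), sw_sub, sw_sub, sw_add, sw_e_left,
            sw_e_right, sw_e_other a c x hxa hxc]
        rw [H_left a c hc x hxc]
        linear_combination q ^ (((j:ℤ)+1) * H n c x) * p1 + q ^ (((j:ℤ)+1) * H n c x) * p2
      · simp only [H_ca a c hc, H_ac a c hc, H_refl, mul_zero, mul_one, zpow_zero, one_mul]
        have hq1 := Q (ν - e n c)
        simp only [sw_sub, sw_e_right] at hq1
        have e1 : ν - e n c + e n c - e n a = ν - e n a := by abel
        have e2 : sw a c ν - e n a + e n a - e n c = sw a c ν - e n c := by abel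
        rw [e1, e2] at hq1
        have hq2 := Q (sw a c ν + e n a - e n c - e n c)
        simp only [sw_sub, sw_add, sw_sw, sw_e_left, sw_e_right] at hq2
        have e3 : sw a c ν + e n a - e n c - e n c + e n c - e n a = sw a c ν - e n c := by abel
        have e4 : ν + e n c - e n a - e n a + e n a - e n c = ν - e n a := by abel
        rw [e3, e4] at hq2
        have hp := P c hca (ν - e n a)
        simp only [sw_sub, sw_e_left] at hp
        have e5 : ν + e n c - e n a - e n c = ν - e n a := by abel
        have e6 : sw a c ν + e n a - e n c - e n a = sw a c ν - e n c := by abel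
        rw [e5, e6]
        linear_combination q^((j:ℤ)+1) * hq1 - q^((j:ℤ)+1) * hq2 - q^((j:ℤ)+1) * hp + hp

/-- the `m = 0` case of the Weyl-reflection identity for a classical index
`i ∈ {1,…,n}` and `b ≠ i-1` (so that `φ_i(b) = 0`): `g_j(b,μ) = g_j(b, s_i·μ)`, where
`s_i` interchanges the entries `μ_{i-1}` and `μ_i`. -/
theorem statement7 (n : ℕ) (hn : 1 ≤ n) (i : ℕ) (hi1 : 1 ≤ i) (hin : i ≤ n)
    (b : Fin (n + 1)) (hb : (b : ℕ) ≠ i - 1) (j : ℕ) (μ : Fin (n + 1) → ℤ) :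
    g n j b μ =
      g n j b (fun k =>
        if (k : ℕ) = i - 1 then μ ⟨i, by omega⟩
        else if (k : ℕ) = i then μ ⟨i - 1, by omega⟩
        else μ k) := by
  have ha : i - 1 < n + 1 := by omega
  have hcc : i < n + 1 := by omega
  set a : Fin (n+1) := ⟨i-1, ha⟩ with hadef
  set c : Fin (n+1) := ⟨i, hcc⟩ with hcdef
  have hc : (c : ℕ) = (a : ℕ) + 1 := by
    show i = i - 1 + 1
    omega
  have htarget : (fun k : Fin (n+1) =>
        if (k : ℕ) = i - 1 then μ ⟨i, by omega⟩
        else if (k : ℕ) = i then μ ⟨i - 1, by omega⟩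
        else μ k) = sw a c μ := by
    funext k
    simp only [sw, Equiv.swap_apply_def]
    by_cases h1 : k = a
    · have hv : (k : ℕ) = i - 1 := by rw [h1]
      rw [if_pos hv, if_pos h1]
    · have h1' : (k : ℕ) ≠ i - 1 := fun h => h1 (Fin.ext h)
      rw [if_neg h1', if_neg h1]
      by_cases h2 : k = c
      · have hv : (k : ℕ) = i := by rw [h2]
        rw [if_pos hv, if_pos h2]
      · have h2' : (k : ℕ) ≠ i := fun h => h2 (Fin.ext h)
        rw [if_neg h2', if_neg h2]
  rw [g_eq_g', g_eq_g', htarget]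
  exact (main_induction n a c hc j).1 b (fun h => hb (by rw [h])) μ

end
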